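/- Let 𝓗 be the class of Λ-Lipschitz functions on an interval S of diameter d, and let 𝓚 be any class of continuous piecewise linear functions on S each having at most (2M)^L linear segments (e.g., functions representable by a ReLU network of depth L with at most M neurons per layer). Then max over f* ∈ 𝓗 of min over f ∈ 𝓚 of sup_{x ∈ S} |f*(x) − f(x)| is at least Λ·d / (4·(2M)^L). -/

import Mathlib

/-- `f` is piecewise linear with at most `k` segments on `[lo, hi]`. -/
def PiecewiseLinearOn (f : ℝ → ℝ) (lo hi : ℝ) (k : ℕ) : Prop :=
  ∃ b : Fin (k + 1) → ℝ, Monotone b ∧ b 0 = lo ∧ b (Fin.last k) = hi ∧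
    ∀ j : Fin k, ∃ α β : ℝ,
      ∀ x ∈ Set.Icc (b j.castSucc) (b j.succ), f x = α * x + β

/-- Index of the piece (among consecutive intervals cut by `b`) containing `x`. -/
noncomputable def pieceIdx (b : ℕ → ℝ) (x : ℝ) : ℕ := sInf {j | x ≤ b (j + 1)}

lemma pieceIdx_mem {b : ℕ → ℝ} {x : ℝ} {k : ℕ} (hk : 0 < k) (hx : x ≤ b k) :
    x ≤ b (pieceIdx b x + 1) := by
  have hne : {j | x ≤ b (j + 1)}.Nonempty :=
    ⟨k - 1, by rw [Set.mem_setOf_eq, Nat.sub_add_cancel hk]; exact hx⟩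
  exact Nat.sInf_mem hne

lemma pieceIdx_le {b : ℕ → ℝ} {x : ℝ} {k : ℕ} (hk : 0 < k) (hx : x ≤ b k) :
    pieceIdx b x ≤ k - 1 :=
  Nat.sInf_le (by rw [Set.mem_setOf_eq, Nat.sub_add_cancel hk]; exact hx)

lemma pieceIdx_lower {b : ℕ → ℝ} {x : ℝ} (hb0 : b 0 ≤ x) : b (pieceIdx b x) ≤ x := by
  rcases hp : pieceIdx b x with _ | j
  · exact hb0
  · have hj : j < pieceIdx b x := by omega
    have := Nat.notMem_of_lt_sInf hj
    simp only [Set.mem_setOf_eq, not_le] at this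
    exact this.le

lemma pieceIdx_mono {b : ℕ → ℝ} {x y : ℝ} {k : ℕ} (hk : 0 < k) (hxy : x ≤ y)
    (hy : y ≤ b k) : pieceIdx b x ≤ pieceIdx b y :=
  Nat.sInf_le (Set.mem_setOf_eq ▸ hxy.trans (pieceIdx_mem hk hy))

set_option maxHeartbeats 1000000 in
/-- there is a `Λ`-Lipschitz function `f*` on an interval of
length `d` such that every continuous piecewise linear function with at most
`(2M)^L` segments (e.g. any depth-`L`, width-`M` ReLU network function) is at
sup-distance at least `Λ·d/(4·(2M)^L)` from `f*`. -/
theorem stmt_7 (Λ d s : ℝ) (hΛ : 0 < Λ) (hd : 0 < d)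
    (M L : ℕ) (hM : 1 ≤ M) (hL : 1 ≤ L) :
    ∃ fstar : ℝ → ℝ,
      (∀ x ∈ Set.Icc s (s + d), ∀ y ∈ Set.Icc s (s + d),
        |fstar x - fstar y| ≤ Λ * |x - y|) ∧
      ∀ f : ℝ → ℝ, PiecewiseLinearOn f s (s + d) ((2 * M) ^ L) →
        Λ * d / (4 * ((2 * M : ℕ) : ℝ) ^ L) ≤
          sSup ((fun x => |fstar x - f x|) '' Set.Icc s (s + d)) := by
  classical
  set k : ℕ := (2 * M) ^ L with hkdef
  have hk1 : 1 ≤ k := Nat.one_le_pow _ _ (by omega)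
  have hkR : (0 : ℝ) < (k : ℝ) := by exact_mod_cast hk1
  set h : ℝ := d / (2 * k) with hhdef
  have hh : 0 < h := by positivity
  have h2k : (2 * (k : ℝ)) * h = d := by
    rw [hhdef]; field_simp
  set E : Set ℝ := {y | ∃ n : ℤ, y = s + 2 * h * n} with hEdef
  have hsE : s ∈ E := ⟨0, by push_cast; ring⟩
  have hEne : E.Nonempty := ⟨s, hsE⟩
  set fstar : ℝ → ℝ := fun x => Λ * Metric.infDist x E with hfdef
  have hfnonneg : ∀ x, 0 ≤ fstar x := fun x =>
    mul_nonneg hΛ.le (Metric.infDist_nonneg)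
  -- grid points
  set e : ℕ → ℝ := fun i => s + i * h with hedef
  have hemono : ∀ ⦃i i' : ℕ⦄, i ≤ i' → e i ≤ e i' := by
    intro i i' hii
    have : (i : ℝ) ≤ i' := by exact_mod_cast hii
    simp only [hedef]
    nlinarith
  have heIcc : ∀ i : ℕ, i ≤ 2 * k → e i ∈ Set.Icc s (s + d) := by
    intro i hi
    constructor
    · have : (0:ℝ) ≤ (i:ℝ) * h := by positivity
      simp only [hedef]; linarith
    · have : (i : ℝ) ≤ 2 * k := by exact_mod_cast hi
      simp only [hedef]
      nlinarith
  -- values of fstar at grid points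
  have feven : ∀ m : ℕ, fstar (e (2 * m)) = 0 := by
    intro m
    have hmem : e (2 * m) ∈ E := ⟨m, by simp [hedef]; push_cast; ring⟩
    simp [hfdef, Metric.infDist_zero_of_mem hmem]
  have fodd : ∀ m : ℕ, Λ * h ≤ fstar (e (2 * m + 1)) := by
    intro m
    have hinf : h ≤ Metric.infDist (e (2 * m + 1)) E := by
      by_contra hcon
      push_neg at hcon
      obtain ⟨y, ⟨n, rfl⟩, hy⟩ := (Metric.infDist_lt_iff hEne).mp hcon
      rw [Real.dist_eq] at hy
      have hz : (1 : ℤ) ≤ |2 * (m : ℤ) + 1 - 2 * n| := by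
        rcases abs_cases (2 * (m : ℤ) + 1 - 2 * n) with ⟨he, _⟩ | ⟨he, _⟩ <;> omega
      have hz' : (1 : ℝ) ≤ |2 * (m : ℝ) + 1 - 2 * (n : ℝ)| := by
        have hcast : ((|2 * (m : ℤ) + 1 - 2 * n| : ℤ) : ℝ) = |2 * (m : ℝ) + 1 - 2 * (n : ℝ)| := by
          push_cast
          ring_nf
        rw [← hcast]
        exact_mod_cast hz
      have : e (2 * m + 1) - (s + 2 * h * n) = (2 * (m : ℝ) + 1 - 2 * n) * h := by
        simp [hedef]; push_cast; ring
      rw [this, abs_mul, abs_of_pos hh] at hy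
      nlinarith
    exact mul_le_mul_of_nonneg_left hinf hΛ.le
  -- Lipschitz property
  have hlip : ∀ x y : ℝ, |fstar x - fstar y| ≤ Λ * |x - y| := by
    intro x y
    have h1 : Metric.infDist x E ≤ Metric.infDist y E + dist x y :=
      Metric.infDist_le_infDist_add_dist
    have h2 : Metric.infDist y E ≤ Metric.infDist x E + dist y x :=
      Metric.infDist_le_infDist_add_dist
    rw [Real.dist_eq] at h1
    rw [Real.dist_eq, abs_sub_comm] at h2
    have habs : |Metric.infDist x E - Metric.infDist y E| ≤ |x - y| :=
      abs_sub_le_iff.mpr ⟨by linarith, by linarith⟩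
    have hgoal : |Λ * Metric.infDist x E - Λ * Metric.infDist y E| ≤ Λ * |x - y| := by
      rw [show Λ * Metric.infDist x E - Λ * Metric.infDist y E
            = Λ * (Metric.infDist x E - Metric.infDist y E) from by ring,
        abs_mul, abs_of_pos hΛ]
      exact mul_le_mul_of_nonneg_left habs hΛ.le
    exact hgoal
  refine ⟨fstar, fun x _ y _ => hlip x y, ?_⟩
  intro f hf
  obtain ⟨b, hbmono, hb0, hblast, hpieces⟩ := hf
  choose α β hαβ using hpieces
  -- extended breakpoints
  set b' : ℕ → ℝ := fun j => b ⟨min j k, by omega⟩ with hb'def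
  have hb'mono : Monotone b' := by
    intro i j hij
    exact hbmono (by simp [Fin.mk_le_mk]; omega)
  have hb'0 : b' 0 = s := by
    simpa [hb'def, show min 0 k = 0 by omega] using hb0
  have hb'k : b' k = s + d := by
    have : (⟨min k k, by omega⟩ : Fin (k + 1)) = Fin.last k := by
      apply Fin.ext; simp [Fin.last]
    simp only [hb'def, this, hblast]
  have hb'cast : ∀ j : ℕ, (hj : j < k) → b' j = b (⟨j, hj⟩ : Fin k).castSucc ∧
      b' (j + 1) = b (⟨j, hj⟩ : Fin k).succ := by
    intro j hj
    constructor
    · simp only [hb'def]; congr 1; apply Fin.ext; simp [Fin.castSucc]; omega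
    · simp only [hb'def]; congr 1; apply Fin.ext; simp [Fin.succ]; omega
  -- pigeonhole: some piece contains three consecutive grid points
  have hebk : ∀ i : ℕ, i ≤ 2 * k → e i ≤ b' k := by
    intro i hi; rw [hb'k]; exact (heIcc i hi).2
  set J : ℕ → ℕ := fun i => pieceIdx b' (e i) with hJdef
  have hJle : ∀ i : ℕ, i ≤ 2 * k → J i ≤ k - 1 := fun i hi =>
    pieceIdx_le hk1 (hebk i hi)
  have hJup : ∀ i : ℕ, i ≤ 2 * k → e i ≤ b' (J i + 1) := fun i hi =>
    pieceIdx_mem hk1 (hebk i hi)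
  have hJlo : ∀ i : ℕ, b' (J i) ≤ e i := fun i =>
    pieceIdx_lower (by rw [hb'0]; simp [hedef]; positivity)
  have hJmono : ∀ i i' : ℕ, i ≤ i' → i' ≤ 2 * k → J i ≤ J i' := fun i i' hii hi' =>
    pieceIdx_mono hk1 (hemono hii) (hebk i' hi')
  have hpig : ∃ i : ℕ, i + 2 ≤ 2 * k ∧ J (i + 2) = J i := by
    by_contra hcon
    push_neg at hcon
    have hgrow : ∀ m : ℕ, m ≤ k → m ≤ J (2 * m) := by
      intro m
      induction m with
      | zero => intro _; omega
      | succ n ih =>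
        intro hn
        have h1 := ih (by omega)
        have h2 := hcon (2 * n) (by omega)
        have h3 := hJmono (2 * n) (2 * n + 2) (by omega) (by omega)
        have : J (2 * n + 2) ≠ J (2 * n) := h2
        have heq : 2 * (n + 1) = 2 * n + 2 := by omega
        rw [heq]
        omega
    have := hgrow k le_rfl
    have := hJle (2 * k) le_rfl
    omega
  obtain ⟨i, hi2k, hJeq⟩ := hpig
  set j : ℕ := J i with hjdef
  have hjk : j < k := by have := hJle i (by omega); omega
  set jf : Fin k := ⟨j, hjk⟩ with hjfdef
  obtain ⟨hc1, hc2⟩ := hb'cast j hjk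
  -- the three grid points lie in piece j
  have hx0 : e i ∈ Set.Icc (b jf.castSucc) (b jf.succ) := by
    rw [← hc1, ← hc2]
    exact ⟨hJlo i, hJup i (by omega)⟩
  have hx2 : e (i + 2) ∈ Set.Icc (b jf.castSucc) (b jf.succ) := by
    rw [← hc1, ← hc2]
    refine ⟨(hJlo i).trans (hemono (by omega)), ?_⟩
    have := hJup (i + 2) hi2k
    rwa [hJeq] at this
  have hx1 : e (i + 1) ∈ Set.Icc (b jf.castSucc) (b jf.succ) :=
    ⟨hx0.1.trans (hemono (by omega)), (hemono (by omega : i + 1 ≤ i + 2)).trans hx2.2⟩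
  have hf0 := hαβ jf (e i) hx0
  have hf1 := hαβ jf (e (i + 1)) hx1
  have hf2 := hαβ jf (e (i + 2)) hx2
  -- f is affine there, so f(e(i+1)) is the average
  have hmid : f (e (i + 1)) - (f (e i) + f (e (i + 2))) / 2 = 0 := by
    rw [hf0, hf1, hf2]
    simp only [hedef]
    push_cast
    ring
  -- fstar alternates
  have hkey : Λ * h ≤ |fstar (e (i + 1)) - (fstar (e i) + fstar (e (i + 2))) / 2| := by
    rcases Nat.even_or_odd i with ⟨m, hm⟩ | ⟨m, hm⟩
    · have h0 : fstar (e i) = 0 := by rw [hm, show m + m = 2 * m by omega]; exact feven m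
      have h2 : fstar (e (i + 2)) = 0 := by
        rw [hm, show m + m + 2 = 2 * (m + 1) by omega]; exact feven (m + 1)
      have h1 : Λ * h ≤ fstar (e (i + 1)) := by
        rw [hm, show m + m + 1 = 2 * m + 1 by omega]; exact fodd m
      rw [h0, h2]
      have hnn : (0:ℝ) ≤ fstar (e (i + 1)) - ((0:ℝ) + 0) / 2 := by
        have := hfnonneg (e (i + 1)); linarith
      rw [abs_of_nonneg hnn]
      linarith
    · have h1 : fstar (e (i + 1)) = 0 := by
        rw [hm, show 2 * m + 1 + 1 = 2 * (m + 1) by omega]; exact feven (m + 1)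
      have h0 : Λ * h ≤ fstar (e i) := by rw [hm]; exact fodd m
      have h2 : Λ * h ≤ fstar (e (i + 2)) := by
        rw [hm, show 2 * m + 1 + 2 = 2 * (m + 1) + 1 by omega]; exact fodd (m + 1)
      rw [h1]
      rw [abs_of_nonpos (by nlinarith [mul_pos hΛ hh] : (0:ℝ) - (fstar (e i) + fstar (e (i+2)))/2 ≤ 0)]
      linarith
  -- hence one of the three errors is at least Λh/2
  set r0 : ℝ := |fstar (e i) - f (e i)| with hr0
  set r1 : ℝ := |fstar (e (i + 1)) - f (e (i + 1))| with hr1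
  set r2 : ℝ := |fstar (e (i + 2)) - f (e (i + 2))| with hr2
  have htri : Λ * h ≤ r1 + (r0 + r2) / 2 := by
    have hdecomp : fstar (e (i + 1)) - (fstar (e i) + fstar (e (i + 2))) / 2 =
        (fstar (e (i + 1)) - f (e (i + 1)))
        - ((fstar (e i) - f (e i)) + (fstar (e (i + 2)) - f (e (i + 2)))) / 2
        + (f (e (i + 1)) - (f (e i) + f (e (i + 2))) / 2) := by ring
    have habs : |fstar (e (i + 1)) - (fstar (e i) + fstar (e (i + 2))) / 2| ≤
        r1 + (r0 + r2) / 2 := by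
      rw [hdecomp, hmid, add_zero]
      calc |(fstar (e (i+1)) - f (e (i+1))) -
            ((fstar (e i) - f (e i)) + (fstar (e (i+2)) - f (e (i+2)))) / 2|
          ≤ r1 + |((fstar (e i) - f (e i)) + (fstar (e (i+2)) - f (e (i+2)))) / 2| :=
            abs_sub (_) (_)
        _ ≤ r1 + (r0 + r2) / 2 := by
            rw [abs_div]
            have := abs_add_le (fstar (e i) - f (e i)) (fstar (e (i+2)) - f (e (i+2)))
            rw [show |(2:ℝ)| = 2 by norm_num]
            gcongr
    linarith
  have hbest : ∃ x ∈ Set.Icc s (s + d), Λ * h / 2 ≤ |fstar x - f x| := by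
    rcases le_total r0 r1 with hA | hA <;> rcases le_total r1 r2 with hB | hB <;>
      rcases le_total r0 r2 with hC | hC
    · exact ⟨e (i + 2), heIcc _ hi2k, by rw [← hr2]; linarith⟩
    · exact ⟨e (i + 2), heIcc _ hi2k, by rw [← hr2]; linarith⟩
    · exact ⟨e (i + 1), heIcc _ (by omega), by rw [← hr1]; linarith⟩
    · exact ⟨e (i + 1), heIcc _ (by omega), by rw [← hr1]; linarith⟩
    · exact ⟨e (i + 2), heIcc _ hi2k, by rw [← hr2]; linarith⟩
    · exact ⟨e i, heIcc _ (by omega), by rw [← hr0]; linarith⟩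
    · exact ⟨e (i + 2), heIcc _ hi2k, by rw [← hr2]; linarith⟩
    · exact ⟨e i, heIcc _ (by omega), by rw [← hr0]; linarith⟩
  obtain ⟨x0, hx0mem, hx0err⟩ := hbest
  -- boundedness of the error function on the interval
  have hbdd : BddAbove ((fun x => |fstar x - f x|) '' Set.Icc s (s + d)) := by
    haveI : NeZero k := ⟨by omega⟩
    have hne : (Finset.univ : Finset (Fin k)).Nonempty :=
      Finset.univ_nonempty (α := Fin k)
    refine ⟨Λ * d + Finset.univ.sup' hne (fun j => |α j| * (|s| + d) + |β j|), ?_⟩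
    rintro y ⟨x, hx, rfl⟩
    have hxk : x ≤ b' k := by rw [hb'k]; exact hx.2
    have hx0' : b' 0 ≤ x := by rw [hb'0]; exact hx.1
    set jx : ℕ := pieceIdx b' x with hjxdef
    have hjxk : jx < k := by have := pieceIdx_le hk1 hxk; omega
    obtain ⟨hd1, hd2⟩ := hb'cast jx hjxk
    have hxin : x ∈ Set.Icc (b (⟨jx, hjxk⟩ : Fin k).castSucc) (b (⟨jx, hjxk⟩ : Fin k).succ) := by
      rw [← hd1, ← hd2]
      exact ⟨pieceIdx_lower hx0', pieceIdx_mem hk1 hxk⟩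
    have hfx := hαβ ⟨jx, hjxk⟩ x hxin
    have hfb : fstar x ≤ Λ * d := by
      have h1 : Metric.infDist x E ≤ dist x s := Metric.infDist_le_dist_of_mem hsE
      have h2 : dist x s ≤ d := by
        rw [Real.dist_eq, abs_of_nonneg (by linarith [hx.1])]
        linarith [hx.2]
      exact mul_le_mul_of_nonneg_left (h1.trans h2) hΛ.le
    have hxabs : |x| ≤ |s| + d := by
      have h1 := hx.1
      have h2 := hx.2
      rcases abs_cases x with ⟨hax, _⟩ | ⟨hax, _⟩ <;>
        rcases abs_cases s with ⟨has, _⟩ | ⟨has, _⟩ <;> linarith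
    have hfxb : |f x| ≤ |α ⟨jx, hjxk⟩| * (|s| + d) + |β ⟨jx, hjxk⟩| := by
      rw [hfx]
      calc |α ⟨jx, hjxk⟩ * x + β ⟨jx, hjxk⟩| ≤ |α ⟨jx, hjxk⟩ * x| + |β ⟨jx, hjxk⟩| :=
            abs_add_le _ _
        _ = |α ⟨jx, hjxk⟩| * |x| + |β ⟨jx, hjxk⟩| := by rw [abs_mul]
        _ ≤ |α ⟨jx, hjxk⟩| * (|s| + d) + |β ⟨jx, hjxk⟩| := by
            gcongr
    have hsup : |α ⟨jx, hjxk⟩| * (|s| + d) + |β ⟨jx, hjxk⟩| ≤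
        Finset.univ.sup' hne (fun j => |α j| * (|s| + d) + |β j|) :=
      Finset.le_sup' (fun j : Fin k => |α j| * (|s| + d) + |β j|) (Finset.mem_univ ⟨jx, hjxk⟩)
    calc |fstar x - f x| ≤ |fstar x| + |f x| := abs_sub _ _
      _ ≤ Λ * d + (|α ⟨jx, hjxk⟩| * (|s| + d) + |β ⟨jx, hjxk⟩|) := by
          rw [abs_of_nonneg (hfnonneg x)]
          exact add_le_add hfb hfxb
      _ ≤ _ := by linarith
  -- conclude
  have hval : Λ * d / (4 * ((2 * M : ℕ) : ℝ) ^ L) = Λ * h / 2 := by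
    have hcast : ((2 * M : ℕ) : ℝ) ^ L = (k : ℝ) := by
      rw [hkdef]; push_cast; ring
    rw [hcast, hhdef]
    field_simp
    ring
  rw [hval]
  exact hx0err.trans (le_csSup hbdd ⟨x0, hx0mem, rfl⟩)
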